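/- Any gDH system with a₁ = 0 and 2b₁ = b₂+b₃ = c ≠ 0 admits the two-parameter family of solutions x(τ) = (c−b₁−b₂−b₃)⁻¹(τ−τ*)⁻¹(1,1,1) + A(τ−τ*)⁻²(1,0,0), for arbitrary A ∈ ℂ and τ* ∈ ℂ, valid for τ ≠ τ*. -/

import Mathlib

set_option maxHeartbeats 1000000


/-- the two-parameter family of solutions of a gDH system with
`a₁ = 0` and `2b₁ = b₂+b₃ = c ≠ 0`. -/
theorem stmt_4 (a₁ a₂ a₃ b₁ b₂ b₃ c τs A : ℂ)
    (ha₁ : a₁ = 0) (hb₁ : 2 * b₁ = b₂ + b₃) (hbc : b₂ + b₃ = c) (hc : c ≠ 0)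
    (x₁ x₂ x₃ : ℂ → ℂ)
    (h₁ : ∀ τ, x₁ τ = (c - b₁ - b₂ - b₃)⁻¹ * (τ - τs)⁻¹ + A * ((τ - τs) ^ 2)⁻¹)
    (h₂ : ∀ τ, x₂ τ = (c - b₁ - b₂ - b₃)⁻¹ * (τ - τs)⁻¹)
    (h₃ : ∀ τ, x₃ τ = (c - b₁ - b₂ - b₃)⁻¹ * (τ - τs)⁻¹)
    (τ : ℂ) (hτ : τ ≠ τs) :
    HasDerivAt x₁ (-a₁ * (x₁ τ - x₂ τ) * (x₃ τ - x₁ τ)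
        + (b₁ * x₂ τ * x₃ τ + b₂ * x₃ τ * x₁ τ + b₃ * x₁ τ * x₂ τ)
        - c * (x₂ τ * x₃ τ)) τ ∧
    HasDerivAt x₂ (-a₂ * (x₂ τ - x₃ τ) * (x₁ τ - x₂ τ)
        + (b₁ * x₂ τ * x₃ τ + b₂ * x₃ τ * x₁ τ + b₃ * x₁ τ * x₂ τ)
        - c * (x₃ τ * x₁ τ)) τ ∧
    HasDerivAt x₃ (-a₃ * (x₃ τ - x₁ τ) * (x₂ τ - x₃ τ)
        + (b₁ * x₂ τ * x₃ τ + b₂ * x₃ τ * x₁ τ + b₃ * x₁ τ * x₂ τ)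
        - c * (x₁ τ * x₂ τ)) τ := by
  have hs : τ - τs ≠ 0 := sub_ne_zero.mpr hτ
  have hc2 : c = 2 * b₁ := (hb₁.trans hbc).symm
  subst hc2
  have hb3 : b₃ = 2 * b₁ - b₂ := by linear_combination hbc
  subst hb3
  subst ha₁
  have hb : b₁ ≠ 0 := by
    intro h
    apply hc
    rw [h]; ring
  set K := (2 * b₁ - b₁ - b₂ - (2 * b₁ - b₂))⁻¹ with hK
  have hbase : HasDerivAt (fun τ : ℂ => τ - τs) 1 τ := (hasDerivAt_id τ).sub_const τs
  have hinv : HasDerivAt (fun τ : ℂ => (τ - τs)⁻¹) (-1 / (τ - τs) ^ 2) τ := by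
    have := hbase.inv hs
    exact this
  have hinv2 : HasDerivAt (fun τ : ℂ => ((τ - τs) ^ 2)⁻¹)
      (-(2 * (τ - τs)) / ((τ - τs) ^ 2) ^ 2) τ := by
    have := (hbase.pow 2).inv (pow_ne_zero 2 hs)
    simp at this
    exact this
  have hd1 : HasDerivAt x₁ (K * (-1 / (τ - τs) ^ 2) + A * (-(2 * (τ - τs)) / ((τ - τs) ^ 2) ^ 2)) τ := by
    rw [funext h₁]
    exact (hinv.const_mul K).add (hinv2.const_mul A)
  have hd2 : HasDerivAt x₂ (K * (-1 / (τ - τs) ^ 2)) τ := by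
    rw [funext h₂]
    exact hinv.const_mul K
  have hd3 : HasDerivAt x₃ (K * (-1 / (τ - τs) ^ 2)) τ := by
    rw [funext h₃]
    exact hinv.const_mul K
  have hKval : K = -b₁⁻¹ := by
    rw [hK]
    rw [show (2 * b₁ - b₁ - b₂ - (2 * b₁ - b₂)) = -b₁ by ring, inv_neg]
  rw [hKval] at hd1 hd2 hd3
  obtain ⟨s, hss⟩ : ∃ s, τ - τs = s := ⟨τ - τs, rfl⟩
  rw [hss] at hs hd1 hd2 hd3
  have e₁ : x₁ τ = -b₁⁻¹ * s⁻¹ + A * (s ^ 2)⁻¹ := by rw [h₁, hKval, hss]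
  have e₂ : x₂ τ = -b₁⁻¹ * s⁻¹ := by rw [h₂, hKval, hss]
  have e₃ : x₃ τ = -b₁⁻¹ * s⁻¹ := by rw [h₃, hKval, hss]
  have key : b₁ * b₁⁻¹ = 1 := mul_inv_cancel₀ hb
  have key2 : s * s⁻¹ = 1 := mul_inv_cancel₀ hs
  refine ⟨?_, ?_, ?_⟩
  · convert hd1 using 1
    rw [e₁, e₂, e₃]
    linear_combination (b₁⁻¹ * s⁻¹ ^ 2 - 2 * A * s⁻¹ ^ 3) * key + (2 * A * s⁻¹ ^ 3) * key2
  · convert hd2 using 1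
    rw [e₁, e₂, e₃]
    linear_combination (b₁⁻¹ * s⁻¹ ^ 2) * key
  · convert hd3 using 1
    rw [e₁, e₂, e₃]
    linear_combination (b₁⁻¹ * s⁻¹ ^ 2) * key
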